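/- No two edges of F_N cross: for every natural number N ≥ 1, there do not exist rational vertices a/b, c/d, e/f, g/h ∈ X_N (all in lowest terms, with positive denominators) satisfying a/b < e/f < c/d < g/h such that a/b is adjacent to c/d in F_N and e/f is adjacent to g/h in F_N. -/

import Mathlib

/-- Membership in the vertex set `X_N`: a pair `(p, q)` of integers represents the
reduced fraction `p/q` with `q ≥ 0`, `gcd(p, q) = 1` and `N ∣ q`; the pair `(1, 0)`
represents `∞ = 1/0`. -/
def memX (N : ℕ) (v : ℤ × ℤ) : Prop :=
  0 ≤ v.2 ∧ IsCoprime v.1 v.2 ∧ (N : ℤ) ∣ v.2 ∧ (v.2 = 0 → v.1 = 1)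

/-- The vertex set `X_N` of the graph `F_N`. -/
def X (N : ℕ) : Type := {v : ℤ × ℤ // memX N v}

/-- The vertex `∞ = 1/0`. -/
def infty (N : ℕ) : X N :=
  ⟨(1, 0), ⟨le_refl 0, isCoprime_one_left, dvd_zero _, fun _ => rfl⟩⟩

/-- The value of a vertex as a rational number (`∞` is sent to junk). -/
def fval {N : ℕ} (v : X N) : ℚ := (v.1.1 : ℚ) / (v.1.2 : ℚ)

/-- The graph `F_N`: two vertices `p/q` and `r/s` (in lowest terms, with `∞ = 1/0`)
are adjacent if and only if `r*q - s*p = ±N`. -/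
def FareyGraph (N : ℕ) : SimpleGraph (X N) where
  Adj v w := v ≠ w ∧ (w.1.1 * v.1.2 - w.1.2 * v.1.1 = (N : ℤ) ∨
      w.1.1 * v.1.2 - w.1.2 * v.1.1 = -(N : ℤ))
  symm := by
    refine ⟨?_⟩
    rintro v w ⟨hne, h | h⟩
    · exact ⟨hne.symm, Or.inr (by linear_combination -h)⟩
    · exact ⟨hne.symm, Or.inl (by linear_combination -h)⟩
  loopless := by refine ⟨?_⟩; rintro v ⟨hne, -⟩; exact hne rfl

/-- No two edges of `F_N` cross: there are no rational vertices
`a/b < e/f < c/d < g/h` in `X_N` with `a/b ~ c/d` and `e/f ~ g/h` in `F_N`. -/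
theorem stmt1 (N : ℕ) (hN : 1 ≤ N) (v₁ v₂ v₃ v₄ : X N)
    (h₁ : 0 < v₁.1.2) (h₂ : 0 < v₂.1.2) (h₃ : 0 < v₃.1.2) (h₄ : 0 < v₄.1.2)
    (h12 : fval v₁ < fval v₂) (h23 : fval v₂ < fval v₃) (h34 : fval v₃ < fval v₄)
    (e13 : (FareyGraph N).Adj v₁ v₃) (e24 : (FareyGraph N).Adj v₂ v₄) : False := by
  obtain ⟨-, h13⟩ := e13
  obtain ⟨-, h24⟩ := e24
  obtain ⟨-, -, hbN, -⟩ := v₁.2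
  obtain ⟨-, -, hfN, -⟩ := v₂.2
  obtain ⟨-, -, hdN, -⟩ := v₃.2
  obtain ⟨-, -, hhN, -⟩ := v₄.2
  set a := v₁.1.1 with ha; set b := v₁.1.2 with hb'
  set e := v₂.1.1 with he; set f := v₂.1.2 with hf'
  set c := v₃.1.1 with hc; set d := v₃.1.2 with hd'
  set g := v₄.1.1 with hg; set h := v₄.1.2 with hh'
  simp only [fval] at h12 h23 h34
  have hb : (0:ℚ) < b := by exact_mod_cast h₁
  have hf : (0:ℚ) < f := by exact_mod_cast h₂
  have hd : (0:ℚ) < d := by exact_mod_cast h₃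
  have hh : (0:ℚ) < h := by exact_mod_cast h₄
  rw [div_lt_div_iff₀ hb hf] at h12
  rw [div_lt_div_iff₀ hf hd] at h23
  rw [div_lt_div_iff₀ hd hh] at h34
  have d12 : a * f < e * b := by exact_mod_cast h12
  have d23 : e * d < c * f := by exact_mod_cast h23
  have d34 : c * h < g * d := by exact_mod_cast h34
  have d13 : a * d < c * b := by nlinarith
  have d14 : a * h < g * b := by nlinarith
  have d24 : e * h < g * f := by nlinarith
  have hN' : (1:ℤ) ≤ (N:ℤ) := by exact_mod_cast hN
  have e13' : c * b - d * a = (N:ℤ) := by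
    rcases h13 with h' | h'
    · exact h'
    · exfalso; nlinarith
  have e24' : g * f - h * e = (N:ℤ) := by
    rcases h24 with h' | h'
    · exact h'
    · exfalso; nlinarith
  have ge12 : (N:ℤ) ≤ e * b - f * a :=
    Int.le_of_dvd (by linarith) (dvd_sub (hbN.mul_left e) (hfN.mul_right a))
  have ge23 : (N:ℤ) ≤ c * f - d * e :=
    Int.le_of_dvd (by linarith) (dvd_sub (hfN.mul_left c) (hdN.mul_right e))
  have ge34 : (N:ℤ) ≤ g * d - h * c :=
    Int.le_of_dvd (by linarith) (dvd_sub (hdN.mul_left g) (hhN.mul_right c))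
  have ge14 : (N:ℤ) ≤ g * b - h * a :=
    Int.le_of_dvd (by linarith) (dvd_sub (hbN.mul_left g) (hhN.mul_right a))
  have key : (c * b - d * a) * (g * f - h * e) =
      (e * b - f * a) * (g * d - h * c) + (g * b - h * a) * (c * f - d * e) := by ring
  nlinarith [mul_le_mul ge12 ge34 (by linarith) (by linarith),
    mul_le_mul ge14 ge23 (by linarith) (by linarith)]
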